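/- Fix μ > 0, V > 0, ξ > 0, integers K ≥ 0 and M ≥ 1, counts n₁,…,n_K ∈ ℕ with s = Σ_{k=1}^K n_k, and θ̄ > 0; set φ = ξMθ̄. For α₀ > 0 let the prior be Gamma with shape α₀ and scale β₀ = μ/α₀ (so that the prior mean is μ and the prior coefficient of variation 1/√α₀ tends to 0 as α₀ → ∞), and put ν(α₀) = α₀ − 1 − Mξ + s and ω(α₀) = VK + α₀/μ. Then lim_{α₀→∞} √(φ/ω(α₀)) · R_{ν(α₀)+1}(2√(ω(α₀) φ)) = μ. -/

import Mathlib

open MeasureTheory ProbabilityTheory Filter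

/-- Modified Bessel function of the third kind:
`K_ν(z) = (1/2) ∫₀^∞ u^(ν-1) exp(-z(u+1/u)/2) du`. -/
noncomputable def besselK (ν z : ℝ) : ℝ :=
  (1 / 2) * ∫ u in Set.Ioi (0 : ℝ), u ^ (ν - 1) * Real.exp (-(z * (u + 1 / u)) / 2)

/-- The ratio `R_ν(z) = K_{ν+1}(z) / K_ν(z)`. -/
noncomputable def besselR (ν z : ℝ) : ℝ := besselK (ν + 1) z / besselK ν z

open Set Real
open scoped Topology


lemma pow_div_fact_le_exp {x : ℝ} (hx : 0 ≤ x) (n : ℕ) : x ^ n / (Nat.factorial n) ≤ Real.exp x := by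
  calc x ^ n / (Nat.factorial n) ≤ ∑ i ∈ Finset.range (n+1), x ^ i / (Nat.factorial i) := by
        refine Finset.single_le_sum (f := fun i => x ^ i / ((Nat.factorial i) : ℝ)) (fun i _ => by positivity)
          (Finset.self_mem_range_succ n)
    _ ≤ Real.exp x := Real.sum_le_exp_of_nonneg hx _

lemma exp_neg_le {x : ℝ} (hx : 0 < x) (n : ℕ) : Real.exp (-x) ≤ (Nat.factorial n) / x ^ n := by
  have h := pow_div_fact_le_exp hx.le n
  have hf : (0:ℝ) < (Nat.factorial n : ℝ) := by positivity
  rw [div_le_iff₀ hf] at h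
  rw [Real.exp_neg, inv_eq_one_div, div_le_div_iff₀ (Real.exp_pos x) (pow_pos hx n)]
  nlinarith [(Real.exp_pos x).le]

lemma besselCont {ν z : ℝ} {u : ℝ} (hu : u ≠ 0) :
    ContinuousAt (fun u : ℝ => u ^ ν * Real.exp (-(z * (u + 1 / u)) / 2)) u := by
  refine (Real.continuousAt_rpow_const u ν (Or.inl hu)).mul ?_
  exact (Real.continuous_exp.continuousAt.comp
    (((continuousAt_const.mul (continuousAt_id.add
      (continuousAt_const.div continuousAt_id hu))).neg.div_const 2)))

lemma besselMeas (ν z : ℝ) :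
    AEStronglyMeasurable (fun u : ℝ => u ^ ν * Real.exp (-(z * (u + 1 / u)) / 2))
      (volume.restrict (Ioi (0:ℝ))) := by
  refine ContinuousOn.aestronglyMeasurable (fun u hu => ?_) measurableSet_Ioi
  exact (besselCont (ne_of_gt hu)).continuousWithinAt

lemma besselIntegrable (ν : ℝ) {z : ℝ} (hz : 0 < z) :
    IntegrableOn (fun u : ℝ => u ^ ν * Real.exp (-(z * (u + 1 / u)) / 2)) (Ioi (0:ℝ)) := by
  set f : ℝ → ℝ := fun u => u ^ ν * Real.exp (-(z * (u + 1 / u)) / 2) with hf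
  have hfnn : ∀ u : ℝ, 0 < u → 0 ≤ f u := fun u hu => by
    have := Real.rpow_nonneg hu.le ν; positivity
  have h01 : IntegrableOn f (Ioc (0:ℝ) 1) := by
    set n : ℕ := ⌈-ν⌉₊ with hn
    have hνn : 0 ≤ ν + n := by
      have := Nat.le_ceil (-ν); linarith
    refine Integrable.mono' (g := fun _ => ((Nat.factorial n) : ℝ) * (2 / z) ^ n)
      (integrableOn_const (measure_Ioc_lt_top).ne) ((besselMeas ν z).mono_measure
        (Measure.restrict_mono Ioc_subset_Ioi_self le_rfl)) ?_
    refine (ae_restrict_iff' measurableSet_Ioc).2 (Filter.Eventually.of_forall fun u hu => ?_)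
    obtain ⟨hu0, hu1⟩ := hu
    have hE : Real.exp (-(z * (u + 1 / u)) / 2) ≤ Real.exp (-(z / (2 * u))) := by
      apply Real.exp_le_exp_of_le
      have he : z / (2*u) = z * (1/u) / 2 := by
        rw [mul_one_div, div_div]; ring_nf
      have h2 : z * (1/u) ≤ z * (u + 1/u) := by nlinarith
      rw [he]; linarith
    have hEn : Real.exp (-(z / (2 * u))) ≤ (Nat.factorial n) * (2 * u / z) ^ n := by
      have := exp_neg_le (x := z / (2 * u)) (by positivity) n
      rw [div_pow, le_div_iff₀ (by positivity)] at this
      calc Real.exp (-(z / (2*u))) = Real.exp (-(z/(2*u))) := rfl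
        _ ≤ (Nat.factorial n) / ((z/(2*u))^n) := exp_neg_le (by positivity) n
        _ = (Nat.factorial n) * (2*u/z)^n := by
            rw [div_eq_mul_inv, ← inv_pow, inv_div]
    have hrw : u ^ ν * (2 * u / z) ^ n = (2/z)^n * u ^ (ν + n) := by
      rw [Real.rpow_add hu0, Real.rpow_natCast, mul_div_assoc, mul_pow, div_pow]
      ring
    have hle1 : u ^ (ν + (n:ℝ)) ≤ 1 := Real.rpow_le_one hu0.le hu1 hνn
    have hfu : f u ≤ ((Nat.factorial n) : ℝ) * (2 / z) ^ n := by
      calc f u ≤ u ^ ν * ((Nat.factorial n) * (2 * u / z) ^ n) := by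
            refine mul_le_mul_of_nonneg_left (hE.trans hEn) (Real.rpow_nonneg hu0.le ν)
        _ = ((Nat.factorial n) : ℝ) * ((2/z)^n * u ^ (ν + n)) := by rw [mul_left_comm, hrw]
        _ ≤ ((Nat.factorial n) : ℝ) * ((2/z)^n * 1) := by
            refine mul_le_mul_of_nonneg_left (mul_le_mul_of_nonneg_left hle1 (by positivity)) (by positivity)
        _ = ((Nat.factorial n) : ℝ) * (2 / z) ^ n := by ring
    rw [Real.norm_eq_abs, abs_of_nonneg (hfnn u hu0)]
    exact hfu
  have h1i : IntegrableOn f (Ioi (1:ℝ)) := by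
    refine integrable_of_isBigO_exp_neg (b := z/4) (by positivity)
      (fun u hu => (besselCont (by linarith [mem_Ici.mp hu] : u ≠ 0)).continuousWithinAt) ?_
    have h1 : Tendsto (fun u : ℝ => u ^ ν * Real.exp (-(z/4) * u)) atTop (𝓝 0) :=
      tendsto_rpow_mul_exp_neg_mul_atTop_nhds_zero ν (z/4) (by positivity)
    rw [Asymptotics.isBigO_iff]
    refine ⟨1, ?_⟩
    filter_upwards [eventually_ge_atTop (1:ℝ), h1.eventually (eventually_le_nhds zero_lt_one)]
      with u hu1 hu2
    have hu0 : 0 < u := by linarith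
    have hE : Real.exp (-(z * (u + 1 / u)) / 2) ≤ Real.exp (-(z/4) * u) * Real.exp (-(z/4) * u) := by
      rw [← Real.exp_add]
      apply Real.exp_le_exp_of_le
      have h1u : 0 ≤ 1/u := by positivity
      have : 0 ≤ z * (1/u) := by positivity
      nlinarith
    have : f u ≤ Real.exp (-(z/4) * u) := by
      calc f u ≤ u ^ ν * (Real.exp (-(z/4) * u) * Real.exp (-(z/4) * u)) :=
            mul_le_mul_of_nonneg_left hE (Real.rpow_nonneg hu0.le ν)
        _ = (u ^ ν * Real.exp (-(z/4) * u)) * Real.exp (-(z/4) * u) := by ring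
        _ ≤ 1 * Real.exp (-(z/4) * u) := by
            refine mul_le_mul_of_nonneg_right hu2 (Real.exp_pos _).le
        _ = Real.exp (-(z/4) * u) := one_mul _
    rw [Real.norm_eq_abs, Real.norm_eq_abs, abs_of_nonneg (hfnn u hu0),
      abs_of_nonneg (Real.exp_pos _).le]
    exact this.trans (le_of_eq (one_mul _).symm)
  have : Ioi (0:ℝ) = Ioc 0 1 ∪ Ioi 1 := (Ioc_union_Ioi_eq_Ioi zero_le_one).symm
  rw [this]
  exact h01.union h1i

lemma besselK_pos (ν : ℝ) {z : ℝ} (hz : 0 < z) : 0 < besselK ν z := by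
  rw [besselK]
  have h : 0 < ∫ u in Ioi (0:ℝ), u ^ (ν-1) * Real.exp (-(z * (u + 1 / u)) / 2) := by
    rw [setIntegral_pos_iff_support_of_nonneg_ae ?h1 (besselIntegrable (ν-1) hz)]
    case h1 =>
      refine (ae_restrict_iff' measurableSet_Ioi).2 (Filter.Eventually.of_forall fun u hu => ?_)
      have := Real.rpow_nonneg (le_of_lt hu) (ν-1); positivity
    have hsub : Ioi (0:ℝ) ⊆ Function.support
        (fun u : ℝ => u ^ (ν-1) * Real.exp (-(z * (u + 1 / u)) / 2)) := by
      intro u hu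
      have h1 : (0:ℝ) < u ^ (ν-1) := Real.rpow_pos_of_pos hu _
      have h2 := Real.exp_pos (-(z * (u + 1 / u)) / 2)
      simp only [Function.mem_support]
      positivity
    rw [Set.inter_eq_right.mpr hsub, Real.volume_Ioi]
    simp
  linarith

lemma besselK_rec {ν z : ℝ} (hν : 0 < ν) (hz : 0 < z) :
    z * besselK (ν + 1) z = 2 * ν * besselK ν z + z * besselK (ν - 1) z := by
  set E : ℝ → ℝ := fun u => Real.exp (-(z * (u + 1 / u)) / 2) with hE
  set F : ℝ → ℝ := fun u => u ^ ν * E u with hFdef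
  set F' : ℝ → ℝ := fun u => (ν * u ^ (ν-1) - z/2 * u ^ ν + z/2 * u ^ (ν-2)) * E u with hF'def
  have hF'eq : F' = fun u => ν * (u ^ (ν-1) * E u) - z/2 * (u ^ ν * E u)
      + z/2 * (u ^ (ν-2) * E u) := by
    funext u; simp only [hF'def]; ring
  have hint1 := besselIntegrable (ν-1) hz
  have hint2 := besselIntegrable ν hz
  have hint3 := besselIntegrable (ν-2) hz
  have hF'int : IntegrableOn F' (Ioi (0:ℝ)) := by
    rw [hF'eq]
    exact ((hint1.const_mul ν).sub (hint2.const_mul (z/2))).add (hint3.const_mul (z/2))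
  have hderiv : ∀ u ∈ Ioi (0:ℝ), HasDerivAt F (F' u) u := by
    intro u hu
    have hu0 : (0:ℝ) < u := hu
    have hu0' : u ≠ 0 := ne_of_gt hu0
    have h1 : HasDerivAt (fun u : ℝ => u ^ ν) (ν * u ^ (ν-1)) u :=
      Real.hasDerivAt_rpow_const (Or.inl hu0')
    have h2 : HasDerivAt (fun u : ℝ => -(z * (u + 1/u)) / 2)
        (-(z * (1 + -(u^2)⁻¹)) / 2) u := by
      have h2a : HasDerivAt (fun u : ℝ => u + 1/u) (1 + -(u^2)⁻¹) u := by
        have h := (hasDerivAt_id' u).add (hasDerivAt_inv hu0')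
        have h' : HasDerivAt (fun y : ℝ => y + y⁻¹) (1 + -(u^2)⁻¹) u := h
        simpa [one_div] using h'
      exact (h2a.const_mul z).neg.div_const 2
    have h3 := h1.mul h2.exp
    refine h3.congr_deriv ?_
    have hpow : u ^ (ν-2) = u ^ ν * (u^2)⁻¹ := by
      rw [show ν - 2 = ν + (-2) by ring, Real.rpow_add hu0, Real.rpow_neg hu0.le,
        show ((2:ℝ)) = ((2:ℕ):ℝ) by norm_num, Real.rpow_natCast]
    simp only [hF'def, hE, hpow]
    ring
  have hcont : ContinuousWithinAt F (Ici (0:ℝ)) 0 := by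
    have hF0 : F 0 = 0 := by
      simp only [hFdef, hE]
      rw [Real.zero_rpow (ne_of_gt hν)]; ring
    rw [ContinuousWithinAt, hF0]
    apply squeeze_zero' (g := fun u : ℝ => u ^ ν)
    · filter_upwards [eventually_mem_nhdsWithin] with u hu
      have hu0 : (0:ℝ) ≤ u := hu
      have : (0:ℝ) ≤ u ^ ν := Real.rpow_nonneg hu0 ν
      have := (Real.exp_pos (-(z * (u + 1 / u)) / 2)).le
      simp only [hFdef, hE]; positivity
    · filter_upwards [eventually_mem_nhdsWithin] with u hu
      have hu0 : (0:ℝ) ≤ u := hu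
      rcases eq_or_lt_of_le hu0 with h|h
      · simp only [hFdef, hE, ← h]
        rw [Real.zero_rpow (ne_of_gt hν)]; simp
      · have hEle : E u ≤ 1 := by
          simp only [hE]
          rw [Real.exp_le_one_iff]
          have h1u : 0 ≤ 1/u := by positivity
          have : 0 ≤ z * (u + 1/u) := by positivity
          linarith
        simp only [hFdef]
        calc u ^ ν * E u ≤ u ^ ν * 1 :=
              mul_le_mul_of_nonneg_left hEle (Real.rpow_nonneg hu0 ν)
          _ = u ^ ν := mul_one _
    · have : Tendsto (fun u : ℝ => u ^ ν) (𝓝 0) (𝓝 ((0:ℝ) ^ ν)) :=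
        (Real.continuousAt_rpow_const 0 ν (Or.inr hν.le)).tendsto
      rw [Real.zero_rpow (ne_of_gt hν)] at this
      exact this.mono_left nhdsWithin_le_nhds
  have htop : Tendsto F atTop (𝓝 0) := by
    apply squeeze_zero' (g := fun u : ℝ => u ^ ν * Real.exp (-(z/2) * u))
    · filter_upwards [eventually_gt_atTop (0:ℝ)] with u hu
      have : (0:ℝ) ≤ u ^ ν := Real.rpow_nonneg hu.le ν
      have := (Real.exp_pos (-(z * (u + 1 / u)) / 2)).le
      simp only [hFdef, hE]; positivity
    · filter_upwards [eventually_gt_atTop (0:ℝ)] with u hu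
      have hEle : E u ≤ Real.exp (-(z/2) * u) := by
        rw [hE]
        apply Real.exp_le_exp_of_le
        have h1u : 0 ≤ 1/u := by positivity
        nlinarith
      simp only [hFdef]
      exact mul_le_mul_of_nonneg_left hEle (Real.rpow_nonneg hu.le ν)
    · exact tendsto_rpow_mul_exp_neg_mul_atTop_nhds_zero ν (z/2) (by positivity)
  have hkey : ∫ u in Ioi (0:ℝ), F' u = 0 - F 0 :=
    integral_Ioi_of_hasDerivAt_of_tendsto hcont hderiv hF'int htop
  have hF0 : F 0 = 0 := by
    simp only [hFdef, hE]
    rw [Real.zero_rpow (ne_of_gt hν)]; ring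
  rw [hF0, sub_zero] at hkey
  rw [hF'eq] at hkey
  have hsub : IntegrableOn
      (fun u : ℝ => ν * (u ^ (ν-1) * E u) - z/2 * (u ^ ν * E u)) (Ioi (0:ℝ)) :=
    (hint1.const_mul ν).sub (hint2.const_mul (z/2))
  rw [integral_add hsub (hint3.const_mul (z/2)),
    integral_sub (hint1.const_mul ν) (hint2.const_mul (z/2)),
    integral_const_mul, integral_const_mul, integral_const_mul] at hkey
  have e1 : besselK ν z = (1/2) * ∫ u in Ioi (0:ℝ), u ^ (ν-1) * E u := rfl
  have e2 : besselK (ν+1) z = (1/2) * ∫ u in Ioi (0:ℝ), u ^ ν * E u := by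
    rw [besselK, show ν+1-1 = ν by ring]
  have e3 : besselK (ν-1) z = (1/2) * ∫ u in Ioi (0:ℝ), u ^ (ν-2) * E u := by
    rw [besselK, show ν-1-1 = ν-2 by ring]
  rw [e1, e2, e3]
  linarith

lemma besselK_sub_one_le {a z : ℝ} (ha : 1/2 ≤ a) (hz : 0 < z) :
    besselK (a - 1) z ≤ besselK a z := by
  set E : ℝ → ℝ := fun u => Real.exp (-(z * (u + 1 / u)) / 2) with hE
  set g : ℝ → ℝ := fun u => u ^ (a-2) * E u - u ^ (a-1) * E u with hgdef
  set h : ℝ → ℝ := fun u => u ^ (-a) * E u - u ^ (-1-a) * E u with hhdef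
  have hg_int : IntegrableOn g (Ioi (0:ℝ)) :=
    (besselIntegrable (a-2) hz).sub (besselIntegrable (a-1) hz)
  have hh_int : IntegrableOn h (Ioi (0:ℝ)) :=
    (besselIntegrable (-a) hz).sub (besselIntegrable (-1-a) hz)
  have hchange : ∫ u in Ioi (0:ℝ), h u = ∫ u in Ioi (0:ℝ), g u := by
    rw [← integral_comp_rpow_Ioi g (p := (-1:ℝ)) (by norm_num)]
    refine setIntegral_congr_fun measurableSet_Ioi (fun x hx => ?_)
    have hx0 : (0:ℝ) < x := hx
    have hinv : x ^ ((-1:ℝ)) = x⁻¹ := Real.rpow_neg_one x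
    have hEinv : E x⁻¹ = E x := by
      simp only [hE, one_div, inv_inv]
      ring_nf
    have hr : ∀ c : ℝ, (x⁻¹) ^ c = x ^ (-c) := fun c => by
      rw [Real.inv_rpow hx0.le, ← Real.rpow_neg hx0.le]
    have hmul : ∀ c : ℝ, x ^ ((-1:ℝ)-1) * x ^ c = x ^ (c - 2) := fun c => by
      rw [← Real.rpow_add hx0]; ring_nf
    simp only [hgdef, hhdef, hinv, hEinv, hr, smul_eq_mul, abs_neg, abs_one, one_mul]
    rw [mul_sub, ← mul_assoc, ← mul_assoc, hmul, hmul]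
    ring_nf
  have hsum : ∫ u in Ioi (0:ℝ), (g u + h u) ≤ 0 := by
    refine setIntegral_nonpos measurableSet_Ioi (fun x hx => ?_)
    have hx0 : (0:ℝ) < x := hx
    have hEpos : 0 < E x := Real.exp_pos _
    have h1 : x ^ (a-1) = x * x ^ (a-2) := by
      rw [show a-1 = 1+(a-2) by ring, Real.rpow_add hx0, Real.rpow_one]
    have h2 : x ^ (-a) = x * x ^ (-1-a) := by
      rw [show -a = 1+(-1-a) by ring, Real.rpow_add hx0, Real.rpow_one]
    simp only [hgdef, hhdef]
    rw [h1, h2]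
    rcases le_total 1 x with hx1 | hx1
    · have hcomp : x ^ (-1-a) ≤ x ^ (a-2) :=
        Real.rpow_le_rpow_of_exponent_le hx1 (by linarith)
      nlinarith [mul_nonneg (mul_nonneg (sub_nonneg.2 hcomp) (sub_nonneg.2 hx1)) hEpos.le]
    · have hcomp : x ^ (a-2) ≤ x ^ (-1-a) :=
        Real.rpow_le_rpow_of_exponent_ge hx0 hx1 (by linarith)
      nlinarith [mul_nonneg (mul_nonneg (sub_nonneg.2 hcomp) (sub_nonneg.2 hx1)) hEpos.le]
  rw [integral_add hg_int hh_int, hchange] at hsum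
  have hgle : ∫ u in Ioi (0:ℝ), g u ≤ 0 := by linarith
  rw [integral_sub (besselIntegrable (a-2) hz) (besselIntegrable (a-1) hz)] at hgle
  have e1 : besselK (a-1) z = (1/2) * ∫ u in Ioi (0:ℝ), u ^ (a-2) * E u := by
    rw [besselK, show a-1-1 = a-2 by ring]
  have e2 : besselK a z = (1/2) * ∫ u in Ioi (0:ℝ), u ^ (a-1) * E u := rfl
  rw [e1, e2]
  linarith

/-- **Theorem 2e: vanishing coefficient of variation of the prior.**
Keeping the prior mean `μ = α₀β₀` fixed and letting the prior coefficient of variation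
`1/√α₀` tend to 0 (i.e. `α₀ → ∞`, `β₀ = μ/α₀`), the posterior mean of the Poisson
intensity converges to the prior mean `μ`. -/
theorem posterior_mean_tendsto_of_precise_prior
    (μ V ξ θbar : ℝ) (hμ : 0 < μ) (hV : 0 < V) (hξ : 0 < ξ) (hθbar : 0 < θbar)
    (K M : ℕ) (hM : 1 ≤ M) (n : Fin K → ℕ)
    (s φ : ℝ) (hs : s = ∑ k, (n k : ℝ)) (hφ : φ = ξ * M * θbar) :
    Tendsto (fun α₀ : ℝ =>
        Real.sqrt (φ / (V * K + α₀ / μ)) *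
          besselR ((α₀ - 1 - M * ξ + s) + 1) (2 * Real.sqrt ((V * K + α₀ / μ) * φ)))
      atTop (nhds μ) := by
  have hMr : (0:ℝ) < (M:ℝ) := by exact_mod_cast Nat.lt_of_lt_of_le Nat.zero_lt_one hM
  have hφ0 : 0 < φ := by rw [hφ]; positivity
  have hVK : (0:ℝ) ≤ V * K := by positivity
  set c : ℝ := (M:ℝ) * ξ - s with hc
  set low : ℝ → ℝ := fun x => (x - c) / (V * K + x / μ) with hlow
  set sq : ℝ → ℝ := fun x => Real.sqrt (φ / (V * K + x / μ)) with hsq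
  -- limit of `low`
  have hlow_lim : Tendsto low atTop (𝓝 μ) := by
    have h1 : Tendsto (fun x : ℝ => (1 - c / x) / (V * K / x + 1 / μ)) atTop
        (𝓝 ((1 - 0) / (0 + 1 / μ))) := by
      refine Tendsto.div (tendsto_const_nhds.sub (tendsto_const_nhds.div_atTop tendsto_id))
        ((tendsto_const_nhds.div_atTop tendsto_id).add tendsto_const_nhds) (by positivity)
    have h2 : ((1:ℝ) - 0) / (0 + 1 / μ) = μ := by
      rw [sub_zero, zero_add, one_div_one_div]
    rw [h2] at h1
    refine h1.congr' ?_
    filter_upwards [eventually_gt_atTop (0:ℝ)] with x hx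
    have hden : 0 < V * K + x / μ := by
      have := div_pos hx hμ; linarith
    rw [hlow]
    rw [div_eq_div_iff (by positivity : (0:ℝ) < V * K / x + 1/μ).ne' hden.ne']
    field_simp
  -- limit of `sq`
  have hden_top : Tendsto (fun x : ℝ => V * K + x / μ) atTop atTop := by
    refine tendsto_atTop_add_const_left _ _ ?_
    exact Tendsto.atTop_div_const hμ tendsto_id
  have hsq_lim : Tendsto sq atTop (𝓝 0) := by
    have h1 : Tendsto (fun x : ℝ => φ / (V * K + x / μ)) atTop (𝓝 0) :=
      tendsto_const_nhds.div_atTop hden_top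
    have := (Real.continuous_sqrt.tendsto 0).comp h1
    simpa [hsq, Real.sqrt_zero, Function.comp_def] using this
  have hup_lim : Tendsto (fun x => low x + sq x) atTop (𝓝 μ) := by
    simpa using hlow_lim.add hsq_lim
  refine tendsto_of_tendsto_of_tendsto_of_le_of_le' hlow_lim hup_lim ?_ ?_
  · -- lower bound
    filter_upwards [eventually_ge_atTop (max 1 (c + 1))] with x hx
    have hx1 : (1:ℝ) ≤ x := le_trans (le_max_left _ _) hx
    have hxc : c + 1 ≤ x := le_trans (le_max_right _ _) hx
    set a : ℝ := x - (M:ℝ) * ξ + s with hadef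
    have ha1 : 1 ≤ a := by rw [hadef]; simp only [hc] at hxc; linarith
    have hx0 : 0 < x := by linarith
    set ω : ℝ := V * K + x / μ with hω
    have hω0 : 0 < ω := by have := div_pos hx0 hμ; rw [hω]; linarith
    set S : ℝ := Real.sqrt (ω * φ) with hS
    have hS0 : 0 < S := Real.sqrt_pos.2 (by positivity)
    have hz0 : 0 < 2 * S := by linarith
    have hrec := besselK_rec (ν := a) (by linarith) hz0
    have hKA := besselK_pos a hz0
    have hKB := besselK_pos (a+1) hz0
    have hKC := besselK_pos (a-1) hz0
    have hidx : (x - 1 - (M:ℝ) * ξ + s) + 1 = a := by rw [hadef]; ring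
    rw [hidx, besselR]
    have hsqrt : Real.sqrt (φ / ω) = S / ω := by
      rw [show φ/ω = (ω*φ)/ω^2 by field_simp, Real.sqrt_div (by positivity),
        Real.sqrt_sq hω0.le]
    have hloweq : low x = a / ω := by rw [hlow, hadef, hc, hω]; ring_nf
    rw [hloweq, hsqrt, div_mul_div_comm]
    rw [div_le_div_iff₀ hω0 (by positivity)]
    have key : a * besselK a (2*S) ≤ S * besselK (a+1) (2*S) := by
      linarith [mul_pos hS0 hKC]
    linarith [mul_le_mul_of_nonneg_right key hω0.le]
  · -- upper bound
    filter_upwards [eventually_ge_atTop (max 1 (c + 1))] with x hx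
    have hx1 : (1:ℝ) ≤ x := le_trans (le_max_left _ _) hx
    have hxc : c + 1 ≤ x := le_trans (le_max_right _ _) hx
    set a : ℝ := x - (M:ℝ) * ξ + s with hadef
    have ha1 : 1 ≤ a := by rw [hadef]; simp only [hc] at hxc; linarith
    have hx0 : 0 < x := by linarith
    set ω : ℝ := V * K + x / μ with hω
    have hω0 : 0 < ω := by have := div_pos hx0 hμ; rw [hω]; linarith
    set S : ℝ := Real.sqrt (ω * φ) with hS
    have hS0 : 0 < S := Real.sqrt_pos.2 (by positivity)
    have hz0 : 0 < 2 * S := by linarith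
    have hrec := besselK_rec (ν := a) (by linarith) hz0
    have hKA := besselK_pos a hz0
    have hKB := besselK_pos (a+1) hz0
    have hKC := besselK_pos (a-1) hz0
    have hKle : besselK (a-1) (2*S) ≤ besselK a (2*S) :=
      besselK_sub_one_le (by linarith) hz0
    have hidx : (x - 1 - (M:ℝ) * ξ + s) + 1 = a := by rw [hadef]; ring
    rw [hidx, besselR]
    have hsqrt : Real.sqrt (φ / ω) = S / ω := by
      rw [show φ/ω = (ω*φ)/ω^2 by field_simp, Real.sqrt_div (by positivity),
        Real.sqrt_sq hω0.le]
    have hloweq : low x = a / ω := by rw [hlow, hadef, hc, hω]; ring_nf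
    rw [hloweq]
    simp only [hsq]
    rw [← hω, hsqrt, div_mul_div_comm, ← add_div,
      div_le_div_iff₀ (by positivity) hω0]
    have key : S * besselK (a+1) (2*S) ≤ (a + S) * besselK a (2*S) := by
      linarith [mul_le_mul_of_nonneg_left hKle hS0.le]
    linarith [mul_le_mul_of_nonneg_right key hω0.le]
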